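/- Let k be a perfect field and let f, g ∈ k[x] be monic irreducible polynomials of degree 2 with f(0) ≠ 0 ≠ g(0) which have the same splitting field F over k (so [F:k] = 2). Let κ be the nontrivial element of Gal(F/k), and let λ ∈ F be a zero of f and μ ∈ F a zero of g. Set h₁(x) = (x − λμ)(x − κ(λμ)) and h₂(x) = (x − λκ(μ))(x − κ(λ)μ). Then h₁ and h₂ lie in k[x], and ∏ over all pairs of zeros (x − λμ)(x − κ(λ)κ(μ))(x − λκ(μ))(x − κ(λ)μ) = h₁(x)h₂(x); moreover this degree-4 polynomial splits into linear factors over k if and only if there exist b, c ∈ k with f(x) = x² − b and g(x) = x² − c. -/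

import Mathlib

open Polynomial

theorem stmt17 {k F : Type*} [Field k] [PerfectField k] [Field F] [Algebra k F]
    (f g : k[X]) (hfm : f.Monic) (hgm : g.Monic) (hf : Irreducible f) (hg : Irreducible g)
    (hfd : f.natDegree = 2) (hgd : g.natDegree = 2)
    (hf0 : f.eval 0 ≠ 0) (hg0 : g.eval 0 ≠ 0)
    [Polynomial.IsSplittingField k F f] [Polynomial.IsSplittingField k F g]
    (hdim : Module.finrank k F = 2)
    (κ : F ≃ₐ[k] F) (hκ : κ ≠ AlgEquiv.refl)
    (lam mu : F) (hlam : lam ∈ f.rootSet F) (hmu : mu ∈ g.rootSet F) :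
    (∃ h₁ : k[X], h₁.map (algebraMap k F) =
        (X - C (lam * mu)) * (X - C (κ (lam * mu)))) ∧
      (∃ h₂ : k[X], h₂.map (algebraMap k F) =
        (X - C (lam * κ mu)) * (X - C (κ lam * mu))) ∧
      (X - C (lam * mu)) * (X - C (κ lam * κ mu)) * (X - C (lam * κ mu)) *
          (X - C (κ lam * mu)) =
        ((X - C (lam * mu)) * (X - C (κ (lam * mu)))) *
          ((X - C (lam * κ mu)) * (X - C (κ lam * mu))) ∧
      ((∃ P : k[X],
          P.map (algebraMap k F) =
            ((X - C (lam * mu)) * (X - C (κ (lam * mu)))) *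
              ((X - C (lam * κ mu)) * (X - C (κ lam * mu))) ∧
          P.Splits) ↔
        ∃ b c : k, f = X ^ 2 - C b ∧ g = X ^ 2 - C c) := by
  classical
  have hinj : Function.Injective (algebraMap k F) := (algebraMap k F).injective
  have hfs : f.Separable := PerfectField.separable_of_irreducible hf
  haveI : IsGalois k F := IsGalois.of_separable_splitting_field hfs
  haveI : FiniteDimensional k F := Polynomial.IsSplittingField.finiteDimensional F f
  have hcard : Fintype.card (F ≃ₐ[k] F) = 2 := by
    rw [← Nat.card_eq_fintype_card, IsGalois.card_aut_eq_finrank, hdim]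
  have hκ1 : κ ≠ 1 := hκ
  have hκκ : ∀ x, κ (κ x) = x := by
    have h2 : κ ^ 2 = 1 := by rw [← hcard]; exact pow_card_eq_one
    intro x
    have := congrArg (fun e : F ≃ₐ[k] F => e x) h2
    simpa [pow_two, AlgEquiv.mul_apply] using this
  have hall : ∀ σ : F ≃ₐ[k] F, σ = 1 ∨ σ = κ := by
    intro σ
    by_contra hc
    push_neg at hc
    have h3 : ({1, κ, σ} : Finset (F ≃ₐ[k] F)).card = 3 := by
      rw [Finset.card_insert_of_notMem (by simp [hκ1.symm, hc.1.symm]),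
        Finset.card_insert_of_notMem (by simp [hc.2.symm]), Finset.card_singleton]
    have := Finset.card_le_univ ({1, κ, σ} : Finset (F ≃ₐ[k] F))
    rw [h3, hcard] at this
    omega
  have hfix : ∀ x : F, κ x = x → ∃ a : k, algebraMap k F a = x := by
    intro x hx
    have hx' : x ∈ IntermediateField.fixedField (⊤ : Subgroup (F ≃ₐ[k] F)) := by
      rintro ⟨σ, -⟩
      rcases hall σ with rfl | rfl
      · rfl
      · exact hx
    rw [← IntermediateField.fixingSubgroup_bot, IsGalois.fixedField_fixingSubgroup] at hx'
    exact IntermediateField.mem_bot.mp hx'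
  -- root facts
  have hlam0 : aeval lam f = 0 := aeval_eq_zero_of_mem_rootSet hlam
  have hmu0 : aeval mu g = 0 := aeval_eq_zero_of_mem_rootSet hmu
  have hklam0 : aeval (κ lam) f = 0 := by
    simpa [hlam0] using Polynomial.aeval_algHom_apply (κ : F →ₐ[k] F) lam f
  have hkmu0 : aeval (κ mu) g = 0 := by
    simpa [hmu0] using Polynomial.aeval_algHom_apply (κ : F →ₐ[k] F) mu g
  -- no root of an irreducible quadratic lies in k
  have hnotk : ∀ p : k[X], Irreducible p → p.natDegree = 2 → ∀ x : F, aeval x p = 0 →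
      ∀ a : k, algebraMap k F a ≠ x := by
    intro p hp hpd x hx a ha
    have h1 : algebraMap k F (p.eval a) = 0 := by
      rw [← aeval_algebraMap_apply_eq_algebraMap_eval, ha, hx]
    have h2 : p.eval a = 0 := hinj (by rw [h1, map_zero])
    obtain ⟨q, hq⟩ := (dvd_iff_isRoot.mpr h2)
    rcases hp.isUnit_or_isUnit hq with hu | hu
    · exact Polynomial.not_isUnit_X_sub_C a hu
    · have hq0 : q ≠ 0 := fun h => by simp [h] at hq; exact hp.ne_zero hq
      have : p.natDegree = 1 := by
        rw [hq, natDegree_mul (X_sub_C_ne_zero a) hq0, natDegree_X_sub_C,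
          Polynomial.natDegree_eq_zero_of_isUnit hu]
      omega
  have hκlam : κ lam ≠ lam := by
    intro h
    obtain ⟨a, ha⟩ := hfix lam h
    exact hnotk f hf hfd lam hlam0 a ha
  have hκmu : κ mu ≠ mu := by
    intro h
    obtain ⟨a, ha⟩ := hfix mu h
    exact hnotk g hg hgd mu hmu0 a ha
  -- nonvanishing
  have haev0 : ∀ p : k[X], aeval (0 : F) p = algebraMap k F (p.eval 0) := by
    intro p
    rw [← map_zero (algebraMap k F)]
    exact aeval_algebraMap_apply_eq_algebraMap_eval 0 p
  have hnz : ∀ x : F, aeval x g = 0 → x ≠ 0 := by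
    rintro x hx rfl
    rw [haev0] at hx
    exact hg0 (hinj (by rw [hx, map_zero]))
  have hmune : mu ≠ 0 := hnz mu hmu0
  have hkmune : κ mu ≠ 0 := hnz _ hkmu0
  have hlamne : lam ≠ 0 := by
    intro h0
    rw [h0, haev0] at hlam0
    exact hf0 (hinj (by rw [hlam0, map_zero]))
  have hklamne : κ lam ≠ 0 := fun h =>
    hlamne (by simpa using κ.injective (by rw [h, map_zero]))
  -- descent of quadratics with κ-swapped roots
  have hquad : ∀ u v : F, κ u = v → κ v = u → ∃ h : k[X],
      h.map (algebraMap k F) = (X - C u) * (X - C v) := by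
    intro u v huv hvu
    obtain ⟨s, hs⟩ := hfix (u + v) (by rw [map_add, huv, hvu, add_comm])
    obtain ⟨t, ht⟩ := hfix (u * v) (by rw [map_mul, huv, hvu, mul_comm])
    refine ⟨X ^ 2 - C s * X + C t, ?_⟩
    simp only [Polynomial.map_add, Polynomial.map_sub, Polynomial.map_mul,
      Polynomial.map_pow, map_X, map_C, hs, ht, C_add, C_mul]
    ring
  have ekmu : κ (lam * κ mu) = κ lam * mu := by rw [map_mul, hκκ]
  obtain ⟨h₁, hh₁⟩ := hquad (lam * mu) (κ (lam * mu)) rfl (hκκ _)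
  obtain ⟨h₂, hh₂⟩ := hquad (lam * κ mu) (κ lam * mu) ekmu (by rw [map_mul, hκκ])
  refine ⟨⟨h₁, hh₁⟩, ⟨h₂, hh₂⟩, by rw [map_mul κ lam mu]; ring, ?_⟩
  constructor
  · rintro ⟨P, hP, hPs⟩
    have hPeq : P = h₁ * h₂ := by
      apply Polynomial.map_injective _ hinj
      rw [hP, Polynomial.map_mul, hh₁, hh₂]
    have hP0 : P ≠ 0 := by
      intro h
      rw [h, Polynomial.map_zero] at hP
      exact (mul_ne_zero (mul_ne_zero (X_sub_C_ne_zero _) (X_sub_C_ne_zero _))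
        (mul_ne_zero (X_sub_C_ne_zero _) (X_sub_C_ne_zero _))) hP.symm
    have key : ∀ (h' : k[X]) (u : F), h'.map (algebraMap k F) = (X - C u) * (X - C (κ u)) →
        h' ∣ P → κ u = u := by
      intro h' u hmap hdvd
      have hsp : h'.Splits := Splits.of_dvd hPs hP0 hdvd
      have hdeg : h'.natDegree = 2 := by
        have := congrArg natDegree hmap
        rwa [natDegree_map, natDegree_mul (X_sub_C_ne_zero u) (X_sub_C_ne_zero (κ u)),
          natDegree_X_sub_C, natDegree_X_sub_C] at this
      have hdeg' : h'.degree ≠ 0 := by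
        rw [degree_eq_natDegree (fun h => by simp [h] at hdeg), hdeg]
        exact_mod_cast (by norm_num : (2 : ℕ) ≠ 0)
      obtain ⟨a, ha⟩ := Splits.exists_eval_eq_zero hsp hdeg'
      have ha' : h'.eval a = 0 := ha
      have h2 : (algebraMap k F a - u) * (algebraMap k F a - κ u) = 0 := by
        have hc := congrArg (Polynomial.eval ((algebraMap k F) a)) hmap
        rw [eval_map, eval₂_at_apply, ha', map_zero] at hc
        simp only [eval_mul, eval_sub, eval_X, eval_C] at hc
        exact hc.symm
      have hua : algebraMap k F a = u := by
        rcases mul_eq_zero.mp h2 with h3 | h3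
        · exact sub_eq_zero.mp h3
        · have h4 := sub_eq_zero.mp h3
          have := congrArg κ h4
          rwa [κ.commutes, hκκ] at this
      rw [← hua, κ.commutes]
    have hA' : κ (lam * mu) = lam * mu := key h₁ _ hh₁ ⟨h₂, hPeq⟩
    have hB' : κ (lam * κ mu) = lam * κ mu := by
      refine key h₂ _ ?_ ⟨h₁, by rw [hPeq, mul_comm]⟩
      rw [hh₂, ekmu]
    have hA : κ lam * κ mu = lam * mu := by rw [← map_mul]; exact hA'
    have hB : κ lam * mu = lam * κ mu := by rw [← ekmu]; exact hB'
    have hkey1 : (lam * mu) * (lam * κ mu) = (κ lam * κ mu) * (κ lam * mu) := by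
      rw [hA, hB]
    have hkey2 : (lam * mu) * (κ lam * mu) = (κ lam * κ mu) * (lam * κ mu) := by
      rw [hA, hB]
    have h6 : lam * lam = κ lam * κ lam :=
      mul_right_cancel₀ (mul_ne_zero hmune hkmune) (by linear_combination hkey1)
    have h6' : mu * mu = κ mu * κ mu :=
      mul_right_cancel₀ (mul_ne_zero hlamne hklamne) (by linear_combination hkey2)
    have h7 : κ lam = -lam := by
      have h8 : (κ lam - lam) * (κ lam + lam) = 0 := by linear_combination -h6
      rcases mul_eq_zero.mp h8 with h9 | h9
      · exact absurd (sub_eq_zero.mp h9) hκlam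
      · exact eq_neg_of_add_eq_zero_left h9
    have h7' : κ mu = -mu := by
      have h8 : (κ mu - mu) * (κ mu + mu) = 0 := by linear_combination -h6'
      rcases mul_eq_zero.mp h8 with h9 | h9
      · exact absurd (sub_eq_zero.mp h9) hκmu
      · exact eq_neg_of_add_eq_zero_left h9
    obtain ⟨b, hb⟩ := hfix (lam * lam) (by rw [map_mul, h7]; ring)
    obtain ⟨c, hc⟩ := hfix (mu * mu) (by rw [map_mul, h7']; ring)
    refine ⟨b, c, ?_, ?_⟩
    · have hmin : f = minpoly k lam := minpoly.eq_of_irreducible_of_monic hf hlam0 hfm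
      have hdvd : f ∣ X ^ 2 - C b := by
        rw [hmin]
        exact minpoly.dvd k lam (by rw [map_sub, map_pow, aeval_X, aeval_C, hb, sq, sub_self])
      exact eq_of_dvd_of_natDegree_le_of_leadingCoeff hdvd
        (by simp [natDegree_X_pow_sub_C, hfd])
        (by rw [hfm.leadingCoeff, (monic_X_pow_sub_C b two_ne_zero).leadingCoeff])
    · have hmin : g = minpoly k mu := minpoly.eq_of_irreducible_of_monic hg hmu0 hgm
      have hdvd : g ∣ X ^ 2 - C c := by
        rw [hmin]
        exact minpoly.dvd k mu (by rw [map_sub, map_pow, aeval_X, aeval_C, hc, sq, sub_self])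
      exact eq_of_dvd_of_natDegree_le_of_leadingCoeff hdvd
        (by simp [natDegree_X_pow_sub_C, hgd])
        (by rw [hgm.leadingCoeff, (monic_X_pow_sub_C c two_ne_zero).leadingCoeff])
  · rintro ⟨b, c, hfb, hgc⟩
    have h1 : lam ^ 2 = algebraMap k F b := by
      have h := hlam0
      rw [hfb, map_sub, map_pow, aeval_X, aeval_C, sub_eq_zero] at h
      exact h
    have h1' : mu ^ 2 = algebraMap k F c := by
      have h := hmu0
      rw [hgc, map_sub, map_pow, aeval_X, aeval_C, sub_eq_zero] at h
      exact h
    have h2 : κ lam ^ 2 = algebraMap k F b := by rw [← map_pow, h1, κ.commutes]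
    have h2' : κ mu ^ 2 = algebraMap k F c := by rw [← map_pow, h1', κ.commutes]
    have hκl : κ lam = -lam := by
      have h8 : (κ lam - lam) * (κ lam + lam) = 0 := by linear_combination h2 - h1
      rcases mul_eq_zero.mp h8 with h9 | h9
      · exact absurd (sub_eq_zero.mp h9) hκlam
      · exact eq_neg_of_add_eq_zero_left h9
    have hκm : κ mu = -mu := by
      have h8 : (κ mu - mu) * (κ mu + mu) = 0 := by linear_combination h2' - h1'
      rcases mul_eq_zero.mp h8 with h9 | h9
      · exact absurd (sub_eq_zero.mp h9) hκmu
      · exact eq_neg_of_add_eq_zero_left h9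
    obtain ⟨a, ha⟩ := hfix (lam * mu) (by rw [map_mul, hκl, hκm]; ring)
    refine ⟨((X - C a) * (X + C a)) ^ 2, ?_, ?_⟩
    · have e1 : κ (lam * mu) = lam * mu := by rw [map_mul, hκl, hκm]; ring
      have e2 : lam * κ mu = -(lam * mu) := by rw [hκm]; ring
      have e3 : κ lam * mu = -(lam * mu) := by rw [hκl]; ring
      rw [e1, e2, e3]
      simp only [Polynomial.map_pow, Polynomial.map_mul, Polynomial.map_sub,
        Polynomial.map_add, map_X, map_C, ha, C_neg]
      ring
    · have hrw : (((X : k[X]) - C a) * (X + C a)) ^ 2 =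
          (X - C a) * ((X - C (-a)) * ((X - C a) * (X - C (-a)))) := by rw [C_neg]; ring
      rw [hrw]
      exact Splits.mul (Splits.X_sub_C _) (Splits.mul (Splits.X_sub_C _)
        (Splits.mul (Splits.X_sub_C _) (Splits.X_sub_C _)))
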